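/- Let c : ℝ² → Fin 2 be the parallel-stripes 2-coloring defined by c(x, y) = (⌊y / (√3/2)⌋ mod 2). Then c is a periodic 2-coloring (with periods u = (1, 0) and v = (0, √3)) and p^per(c) = 1/3; in particular the lower bound 1/3 for periodic 2-colorings is attained. -/

import Mathlib

open MeasureTheory Real
open Set intervalIntegral

noncomputable section

abbrev Plane := EuclideanSpace ℝ (Fin 2)

def vec (x y : ℝ) : Plane := (WithLp.equiv 2 (Fin 2 → ℝ)).symm ![x, y]

def dir (θ : ℝ) : Plane := vec (Real.cos θ) (Real.sin θ)

/-- The fundamental parallelogram `{t•u + s•v : 0 ≤ t, s < 1}`. -/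
def para (u v : Plane) : Set Plane :=
  {x | ∃ t s : ℝ, 0 ≤ t ∧ t < 1 ∧ 0 ≤ s ∧ s < 1 ∧ x = t • u + s • v}

/-- `p^per(c)` for a periodic coloring with fundamental parallelogram `para u v`. -/
def pper {k : ℕ} (c : Plane → Fin k) (u v : Plane) : ℝ :=
  (1 / (2 * π * (volume (para u v)).toReal)) *
    ∫ a in para u v, ∫ θ in (0:ℝ)..(2*π),
      (if c a = c (a + dir θ) then (1:ℝ) else 0)

open Fin.CommRing in
/-- The parallel-stripes 2-coloring: horizontal strips of width `√3/2`, closed below and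
open above, with alternating colors; the color of `(x, y)` is `⌊y/(√3/2)⌋ mod 2`. -/
def stripes : Plane → Fin 2 := fun x => ((⌊x 1 / (Real.sqrt 3 / 2)⌋ : ℤ) : Fin 2)

lemma s3_pos : (0:ℝ) < Real.sqrt 3 := Real.sqrt_pos.2 (by norm_num)
lemma s3_sq : Real.sqrt 3 * Real.sqrt 3 = 3 := Real.mul_self_sqrt (by norm_num)
lemma one_lt_s3 : (1:ℝ) < Real.sqrt 3 := by nlinarith [s3_sq, s3_pos]

lemma floorh {y : ℝ} {n : ℤ} (h1 : n * (Real.sqrt 3/2) ≤ y) (h2 : y < (n+1) * (Real.sqrt 3/2)) :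
    ⌊y / (Real.sqrt 3/2)⌋ = n := by
  have hp : (0:ℝ) < Real.sqrt 3 / 2 := by linarith [s3_pos]
  rw [Int.floor_eq_iff]
  exact ⟨(le_div_iff₀ hp).2 h1, by rw [div_lt_iff₀ hp]; push_cast; exact h2⟩

def P (y s : ℝ) : Prop := (⌊y/(Real.sqrt 3/2)⌋ % 2 = ⌊(y+s)/(Real.sqrt 3/2)⌋ % 2)

lemma caseA {s : ℝ} (h0 : 0 ≤ s) (h1 : s ≤ Real.sqrt 3/2) :
    {y | P y s} ∩ Ico 0 (Real.sqrt 3)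
      = Ico 0 (Real.sqrt 3/2 - s) ∪ Ico (Real.sqrt 3/2) (Real.sqrt 3 - s) := by
  have hs3 := s3_pos; have h13 := one_lt_s3
  ext y
  simp only [mem_inter_iff, mem_setOf_eq, mem_Ico, mem_union]
  constructor
  · rintro ⟨hP, hy0, hy3⟩
    rcases lt_or_ge y (Real.sqrt 3/2 - s) with hA | hA
    · exact Or.inl ⟨hy0, hA⟩
    rcases lt_or_ge y (Real.sqrt 3/2) with hB | hB
    · exfalso
      have f1 : ⌊y/(Real.sqrt 3/2)⌋ = 0 := floorh (by push_cast; linarith) (by push_cast; linarith)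
      have f2 : ⌊(y+s)/(Real.sqrt 3/2)⌋ = 1 := floorh (by push_cast; linarith) (by push_cast; linarith)
      rw [P, f1, f2] at hP; norm_num at hP
    rcases lt_or_ge y (Real.sqrt 3 - s) with hC | hC
    · exact Or.inr ⟨hB, hC⟩
    · exfalso
      have f1 : ⌊y/(Real.sqrt 3/2)⌋ = 1 := floorh (by push_cast; linarith) (by push_cast; linarith)
      have f2 : ⌊(y+s)/(Real.sqrt 3/2)⌋ = 2 := floorh (by push_cast; linarith) (by push_cast; linarith)
      rw [P, f1, f2] at hP; norm_num at hP
  · rintro (⟨hy0, hA⟩ | ⟨hB, hC⟩)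
    · have f1 : ⌊y/(Real.sqrt 3/2)⌋ = 0 := floorh (by push_cast; linarith) (by push_cast; linarith)
      have f2 : ⌊(y+s)/(Real.sqrt 3/2)⌋ = 0 := floorh (by push_cast; linarith) (by push_cast; linarith)
      exact ⟨by rw [P, f1, f2], hy0, by linarith⟩
    · have f1 : ⌊y/(Real.sqrt 3/2)⌋ = 1 := floorh (by push_cast; linarith) (by push_cast; linarith)
      have f2 : ⌊(y+s)/(Real.sqrt 3/2)⌋ = 1 := floorh (by push_cast; linarith) (by push_cast; linarith)
      exact ⟨by rw [P, f1, f2], by linarith, by linarith⟩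

lemma caseB {s : ℝ} (h0 : Real.sqrt 3/2 ≤ s) (h1 : s ≤ 1) :
    {y | P y s} ∩ Ico 0 (Real.sqrt 3)
      = Ico (Real.sqrt 3 - s) (Real.sqrt 3/2) ∪ Ico (3*(Real.sqrt 3/2) - s) (Real.sqrt 3) := by
  have hs3 := s3_pos; have h13 := one_lt_s3
  ext y
  simp only [mem_inter_iff, mem_setOf_eq, mem_Ico, mem_union]
  constructor
  · rintro ⟨hP, hy0, hy3⟩
    rcases lt_or_ge y (Real.sqrt 3 - s) with hA | hA
    · exfalso
      have f1 : ⌊y/(Real.sqrt 3/2)⌋ = 0 := floorh (by push_cast; linarith) (by push_cast; linarith)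
      have f2 : ⌊(y+s)/(Real.sqrt 3/2)⌋ = 1 := floorh (by push_cast; linarith) (by push_cast; linarith)
      rw [P, f1, f2] at hP; norm_num at hP
    rcases lt_or_ge y (Real.sqrt 3/2) with hB | hB
    · exact Or.inl ⟨hA, hB⟩
    rcases lt_or_ge y (3*(Real.sqrt 3/2) - s) with hC | hC
    · exfalso
      have f1 : ⌊y/(Real.sqrt 3/2)⌋ = 1 := floorh (by push_cast; linarith) (by push_cast; linarith)
      have f2 : ⌊(y+s)/(Real.sqrt 3/2)⌋ = 2 := floorh (by push_cast; linarith) (by push_cast; linarith)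
      rw [P, f1, f2] at hP; norm_num at hP
    · exact Or.inr ⟨hC, hy3⟩
  · rintro (⟨hA, hB⟩ | ⟨hC, hy3⟩)
    · have f1 : ⌊y/(Real.sqrt 3/2)⌋ = 0 := floorh (by push_cast; linarith) (by push_cast; linarith)
      have f2 : ⌊(y+s)/(Real.sqrt 3/2)⌋ = 2 := floorh (by push_cast; linarith) (by push_cast; linarith)
      exact ⟨by (rw [P, f1, f2]; try decide), by linarith, by linarith⟩
    · have f1 : ⌊y/(Real.sqrt 3/2)⌋ = 1 := floorh (by push_cast; linarith) (by push_cast; linarith)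
      have f2 : ⌊(y+s)/(Real.sqrt 3/2)⌋ = 3 := floorh (by push_cast; linarith) (by push_cast; linarith)
      exact ⟨by (rw [P, f1, f2]; try decide), by linarith, hy3⟩

lemma caseC {s : ℝ} (h0 : -(Real.sqrt 3/2) ≤ s) (h1 : s ≤ 0) :
    {y | P y s} ∩ Ico 0 (Real.sqrt 3)
      = Ico (-s) (Real.sqrt 3/2) ∪ Ico (Real.sqrt 3/2 - s) (Real.sqrt 3) := by
  have hs3 := s3_pos; have h13 := one_lt_s3
  ext y
  simp only [mem_inter_iff, mem_setOf_eq, mem_Ico, mem_union]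
  constructor
  · rintro ⟨hP, hy0, hy3⟩
    rcases lt_or_ge y (-s) with hA | hA
    · exfalso
      have f1 : ⌊y/(Real.sqrt 3/2)⌋ = 0 := floorh (by push_cast; linarith) (by push_cast; linarith)
      have f2 : ⌊(y+s)/(Real.sqrt 3/2)⌋ = -1 := floorh (by push_cast; linarith) (by push_cast; linarith)
      rw [P, f1, f2] at hP; norm_num at hP
    rcases lt_or_ge y (Real.sqrt 3/2) with hB | hB
    · exact Or.inl ⟨hA, hB⟩
    rcases lt_or_ge y (Real.sqrt 3/2 - s) with hC | hC
    · exfalso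
      have f1 : ⌊y/(Real.sqrt 3/2)⌋ = 1 := floorh (by push_cast; linarith) (by push_cast; linarith)
      have f2 : ⌊(y+s)/(Real.sqrt 3/2)⌋ = 0 := floorh (by push_cast; linarith) (by push_cast; linarith)
      rw [P, f1, f2] at hP; norm_num at hP
    · exact Or.inr ⟨hC, hy3⟩
  · rintro (⟨hA, hB⟩ | ⟨hC, hy3⟩)
    · have f1 : ⌊y/(Real.sqrt 3/2)⌋ = 0 := floorh (by push_cast; linarith) (by push_cast; linarith)
      have f2 : ⌊(y+s)/(Real.sqrt 3/2)⌋ = 0 := floorh (by push_cast; linarith) (by push_cast; linarith)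
      exact ⟨by (rw [P, f1, f2]; try decide), by linarith, by linarith⟩
    · have f1 : ⌊y/(Real.sqrt 3/2)⌋ = 1 := floorh (by push_cast; linarith) (by push_cast; linarith)
      have f2 : ⌊(y+s)/(Real.sqrt 3/2)⌋ = 1 := floorh (by push_cast; linarith) (by push_cast; linarith)
      exact ⟨by (rw [P, f1, f2]; try decide), by linarith, hy3⟩

lemma caseD {s : ℝ} (h0 : -1 ≤ s) (h1 : s ≤ -(Real.sqrt 3/2)) :
    {y | P y s} ∩ Ico 0 (Real.sqrt 3)
      = Ico 0 (-(Real.sqrt 3/2) - s) ∪ Ico (Real.sqrt 3/2) (-s) := by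
  have hs3 := s3_pos; have h13 := one_lt_s3
  ext y
  simp only [mem_inter_iff, mem_setOf_eq, mem_Ico, mem_union]
  constructor
  · rintro ⟨hP, hy0, hy3⟩
    rcases lt_or_ge y (-(Real.sqrt 3/2) - s) with hA | hA
    · exact Or.inl ⟨hy0, hA⟩
    rcases lt_or_ge y (Real.sqrt 3/2) with hB | hB
    · exfalso
      have f1 : ⌊y/(Real.sqrt 3/2)⌋ = 0 := floorh (by push_cast; linarith) (by push_cast; linarith)
      have f2 : ⌊(y+s)/(Real.sqrt 3/2)⌋ = -1 := floorh (by push_cast; linarith) (by push_cast; linarith)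
      rw [P, f1, f2] at hP; norm_num at hP
    rcases lt_or_ge y (-s) with hC | hC
    · exact Or.inr ⟨hB, hC⟩
    · exfalso
      have f1 : ⌊y/(Real.sqrt 3/2)⌋ = 1 := floorh (by push_cast; linarith) (by push_cast; linarith)
      have f2 : ⌊(y+s)/(Real.sqrt 3/2)⌋ = 0 := floorh (by push_cast; linarith) (by push_cast; linarith)
      rw [P, f1, f2] at hP; norm_num at hP
  · rintro (⟨hy0, hA⟩ | ⟨hB, hC⟩)
    · have f1 : ⌊y/(Real.sqrt 3/2)⌋ = 0 := floorh (by push_cast; linarith) (by push_cast; linarith)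
      have f2 : ⌊(y+s)/(Real.sqrt 3/2)⌋ = -2 := floorh (by push_cast; linarith) (by push_cast; linarith)
      exact ⟨by (rw [P, f1, f2]; try decide), hy0, by linarith⟩
    · have f1 : ⌊y/(Real.sqrt 3/2)⌋ = 1 := floorh (by push_cast; linarith) (by push_cast; linarith)
      have f2 : ⌊(y+s)/(Real.sqrt 3/2)⌋ = -1 := floorh (by push_cast; linarith) (by push_cast; linarith)
      exact ⟨by (rw [P, f1, f2]; try decide), by linarith, by linarith⟩

lemma volIcoUnion {a b c d : ℝ} (hab : a ≤ b) (hbc : b ≤ c) (hcd : c ≤ d) :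
    volume.real (Ico a b ∪ Ico c d) = (b - a) + (d - c) := by
  have hdj : Disjoint (Ico a b) (Ico c d) := by
    rw [Set.disjoint_left]; rintro x ⟨_, h1⟩ ⟨h2, _⟩; linarith
  rw [measureReal_def, measure_union hdj measurableSet_Ico, Real.volume_Ico, Real.volume_Ico,
    ENNReal.toReal_add ENNReal.ofReal_ne_top ENNReal.ofReal_ne_top,
    ENNReal.toReal_ofReal (by linarith), ENNReal.toReal_ofReal (by linarith)]

lemma measP (s : ℝ) : MeasurableSet {y | P y s} := by
  have h1 : Measurable fun y : ℝ => ⌊y/(Real.sqrt 3/2)⌋ % 2 :=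
    (measurable_from_top (f := fun n : ℤ => n % 2)).comp
      (Measurable.floor (measurable_id.div_const _))
  have h2 : Measurable fun y : ℝ => ⌊(y+s)/(Real.sqrt 3/2)⌋ % 2 :=
    (measurable_from_top (f := fun n : ℤ => n % 2)).comp
      (Measurable.floor ((measurable_id.add_const s).div_const _))
  exact measurableSet_eq_fun h1 h2

lemma sliceInt {s : ℝ} (hs0 : -1 ≤ s) (hs1 : s ≤ 1) :
    ∫ y in Ico (0:ℝ) (Real.sqrt 3),
        (if ⌊y/(Real.sqrt 3/2)⌋ % 2 = ⌊(y+s)/(Real.sqrt 3/2)⌋ % 2 then (1:ℝ) else 0)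
      = abs (Real.sqrt 3 - 2 * abs s) := by
  have hs3 := s3_pos; have h13 := one_lt_s3
  have hrw : (fun y => if ⌊y/(Real.sqrt 3/2)⌋ % 2 = ⌊(y+s)/(Real.sqrt 3/2)⌋ % 2 then (1:ℝ) else 0)
      = Set.indicator {y | P y s} (fun _ => (1:ℝ)) := by
    funext y
    by_cases h : P y s
    · exact (if_pos h).trans (Set.indicator_of_mem (show y ∈ {y | P y s} from h) (fun _ => (1:ℝ))).symm
    · exact (if_neg h).trans (Set.indicator_of_notMem (show y ∉ {y | P y s} from h) (fun _ => (1:ℝ))).symm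
  rw [hrw, setIntegral_indicator (measP s), setIntegral_const, smul_eq_mul, mul_one,
    Set.inter_comm]
  rcases le_or_gt s 0 with hneg | hpos
  · rcases le_or_gt (-(Real.sqrt 3/2)) s with hC | hD
    · rw [caseC hC hneg, volIcoUnion (by linarith) (by linarith) (by linarith),
        abs_of_nonpos hneg, abs_of_nonneg (by linarith)]
      ring
    · rw [caseD hs0 hD.le, volIcoUnion (by linarith) (by linarith) (by linarith),
        abs_of_nonpos hneg, abs_of_nonpos (by linarith)]
      ring
  · rcases le_or_gt s (Real.sqrt 3/2) with hA | hB
    · rw [caseA hpos.le hA, volIcoUnion (by linarith) (by linarith) (by linarith),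
        abs_of_nonneg hpos.le, abs_of_nonneg (by linarith)]
      ring
    · rw [caseB hB.le hs1, volIcoUnion (by linarith) (by linarith) (by linarith),
        abs_of_nonneg hpos.le, abs_of_nonpos (by linarith)]
      ring

lemma intPiece (a b d c : ℝ) :
    ∫ θ in a..b, (d + c * Real.sin θ) = d*(b-a) + c*(Real.cos a - Real.cos b) := by
  rw [intervalIntegral.integral_add intervalIntegrable_const
      ((Real.continuous_sin.intervalIntegrable a b).const_mul c),
    intervalIntegral.integral_const_mul, integral_sin, intervalIntegral.integral_const,
    smul_eq_mul]
  ring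

lemma sinBound1 {θ : ℝ} (h1 : 0 ≤ θ) (h2 : θ ≤ π/3) : Real.sin θ ≤ Real.sqrt 3/2 := by
  rw [← Real.sin_pi_div_three]
  exact Real.strictMonoOn_sin.monotoneOn ⟨by linarith [pi_pos], by linarith [pi_pos]⟩
    ⟨by linarith [pi_pos], by linarith [pi_pos]⟩ h2

lemma sinBound2 {θ : ℝ} (h1 : π/3 ≤ θ) (h2 : θ ≤ 2*π/3) : Real.sqrt 3/2 ≤ Real.sin θ := by
  have : Real.cos (π/6) ≤ Real.cos |π/2 - θ| := by
    apply Real.cos_le_cos_of_nonneg_of_le_pi (abs_nonneg _) (by linarith [pi_pos])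
    rw [abs_le]; constructor <;> linarith
  rwa [Real.cos_abs, Real.cos_pi_div_two_sub, Real.cos_pi_div_six] at this

example : True := trivial

lemma thetaIntegral :
    (∫ θ in (0:ℝ)..(2*π), |Real.sqrt 3 - 2 * abs (Real.sin θ)|) = 2*Real.sqrt 3*π/3 := by
  have hpi := pi_pos
  have hs3 := s3_pos
  have cont : Continuous fun θ : ℝ => |Real.sqrt 3 - 2 * abs (Real.sin θ)| :=
    (continuous_const.sub (continuous_const.mul Real.continuous_sin.abs)).abs
  have hI : ∀ a b : ℝ, IntervalIntegrable (fun θ : ℝ => |Real.sqrt 3 - 2 * abs (Real.sin θ)|)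
      volume a b := fun a b => cont.intervalIntegrable a b
  have e1 : (∫ θ in (0:ℝ)..(π/3), |Real.sqrt 3 - 2 * abs (Real.sin θ)|)
      = Real.sqrt 3*π/3 - 1 := by
    rw [intervalIntegral.integral_congr (g := fun θ => Real.sqrt 3 + (-2) * Real.sin θ) ?_]
    · rw [intPiece, Real.cos_zero, Real.cos_pi_div_three]; ring
    · rw [Set.uIcc_of_le (by positivity)]
      rintro θ ⟨h1, h2⟩
      have hs1 : 0 ≤ Real.sin θ := Real.sin_nonneg_of_nonneg_of_le_pi h1 (by linarith)
      have hs2 := sinBound1 h1 h2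
      simp only
      rw [abs_of_nonneg hs1, abs_of_nonneg (by linarith : (0:ℝ) ≤ Real.sqrt 3 - 2*Real.sin θ)]
      ring
  have e2 : (∫ θ in (π/3)..(2*π/3), |Real.sqrt 3 - 2 * abs (Real.sin θ)|)
      = 2 - Real.sqrt 3*π/3 := by
    rw [intervalIntegral.integral_congr (g := fun θ => -Real.sqrt 3 + 2 * Real.sin θ) ?_]
    · rw [intPiece, Real.cos_pi_div_three, show 2*π/3 = π - π/3 by ring, Real.cos_pi_sub,
        Real.cos_pi_div_three]
      ring
    · rw [Set.uIcc_of_le (by linarith)]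
      rintro θ ⟨h1, h2⟩
      have hs2 := sinBound2 h1 h2
      simp only
      rw [abs_of_nonneg (show (0:ℝ) ≤ Real.sin θ by linarith), abs_of_nonpos (by linarith : Real.sqrt 3 - 2*Real.sin θ ≤ 0)]
      ring
  have e3 : (∫ θ in (2*π/3)..π, |Real.sqrt 3 - 2 * abs (Real.sin θ)|)
      = Real.sqrt 3*π/3 - 1 := by
    rw [intervalIntegral.integral_congr (g := fun θ => Real.sqrt 3 + (-2) * Real.sin θ) ?_]
    · rw [intPiece, Real.cos_pi, show 2*π/3 = π - π/3 by ring, Real.cos_pi_sub,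
        Real.cos_pi_div_three]
      ring
    · rw [Set.uIcc_of_le (by linarith)]
      rintro θ ⟨h1, h2⟩
      have hs1 : 0 ≤ Real.sin θ := Real.sin_nonneg_of_nonneg_of_le_pi (by linarith) h2
      have hs2 : Real.sin θ ≤ Real.sqrt 3/2 := by
        rw [← Real.sin_pi_sub]
        exact sinBound1 (by linarith) (by linarith)
      simp only
      rw [abs_of_nonneg hs1, abs_of_nonneg (by linarith : (0:ℝ) ≤ Real.sqrt 3 - 2*Real.sin θ)]
      ring
  have e4 : (∫ θ in π..(4*π/3), |Real.sqrt 3 - 2 * abs (Real.sin θ)|)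
      = Real.sqrt 3*π/3 - 1 := by
    rw [intervalIntegral.integral_congr (g := fun θ => Real.sqrt 3 + 2 * Real.sin θ) ?_]
    · rw [intPiece, Real.cos_pi, show 4*π/3 = π/3 + π by ring, Real.cos_add_pi,
        Real.cos_pi_div_three]
      ring
    · rw [Set.uIcc_of_le (by linarith)]
      rintro θ ⟨h1, h2⟩
      have key : -Real.sin θ = Real.sin (θ - π) := by rw [Real.sin_sub_pi]
      have hs1 : Real.sin θ ≤ 0 := by
        have := Real.sin_nonneg_of_nonneg_of_le_pi (by linarith : 0 ≤ θ - π) (by linarith)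
        linarith [key ▸ this]
      have hs2 : -(Real.sqrt 3/2) ≤ Real.sin θ := by
        have := sinBound1 (by linarith : 0 ≤ θ - π) (by linarith : θ - π ≤ π/3)
        rw [← key] at this; linarith
      simp only
      rw [abs_of_nonpos hs1, abs_of_nonneg (by linarith : (0:ℝ) ≤ Real.sqrt 3 - 2*(-Real.sin θ))]
      ring
  have e5 : (∫ θ in (4*π/3)..(5*π/3), |Real.sqrt 3 - 2 * abs (Real.sin θ)|)
      = 2 - Real.sqrt 3*π/3 := by
    rw [intervalIntegral.integral_congr (g := fun θ => -Real.sqrt 3 + (-2) * Real.sin θ) ?_]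
    · rw [intPiece, show 4*π/3 = π/3 + π by ring, Real.cos_add_pi,
        show 5*π/3 = 2*π - π/3 by ring, Real.cos_two_pi_sub, Real.cos_pi_div_three]
      ring
    · rw [Set.uIcc_of_le (by linarith)]
      rintro θ ⟨h1, h2⟩
      have key : -Real.sin θ = Real.sin (θ - π) := by rw [Real.sin_sub_pi]
      have hs2 : Real.sqrt 3/2 ≤ -Real.sin θ := by
        rw [key]; exact sinBound2 (by linarith) (by linarith)
      simp only
      rw [abs_of_nonpos (show Real.sin θ ≤ 0 by linarith), abs_of_nonpos (by linarith : Real.sqrt 3 - 2*(-Real.sin θ) ≤ 0)]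
      ring
  have e6 : (∫ θ in (5*π/3)..(2*π), |Real.sqrt 3 - 2 * abs (Real.sin θ)|)
      = Real.sqrt 3*π/3 - 1 := by
    rw [intervalIntegral.integral_congr (g := fun θ => Real.sqrt 3 + 2 * Real.sin θ) ?_]
    · rw [intPiece, Real.cos_two_pi, show 5*π/3 = 2*π - π/3 by ring, Real.cos_two_pi_sub,
        Real.cos_pi_div_three]
      ring
    · rw [Set.uIcc_of_le (by linarith)]
      rintro θ ⟨h1, h2⟩
      have key : -Real.sin θ = Real.sin (θ - π) := by rw [Real.sin_sub_pi]
      have hs1 : Real.sin θ ≤ 0 := by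
        have := Real.sin_nonneg_of_nonneg_of_le_pi (by linarith : 0 ≤ θ - π) (by linarith)
        linarith [key ▸ this]
      have hs2 : -(Real.sqrt 3/2) ≤ Real.sin θ := by
        have hx : Real.sin (θ - π) ≤ Real.sqrt 3/2 := by
          rw [← Real.sin_pi_sub]
          exact sinBound1 (by linarith) (by linarith)
        rw [← key] at hx; linarith
      simp only
      rw [abs_of_nonpos hs1, abs_of_nonneg (by linarith : (0:ℝ) ≤ Real.sqrt 3 - 2*(-Real.sin θ))]
      ring
  rw [← intervalIntegral.integral_add_adjacent_intervals (hI 0 (π/3)) (hI (π/3) (2*π)),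
    ← intervalIntegral.integral_add_adjacent_intervals (hI (π/3) (2*π/3)) (hI (2*π/3) (2*π)),
    ← intervalIntegral.integral_add_adjacent_intervals (hI (2*π/3) π) (hI π (2*π)),
    ← intervalIntegral.integral_add_adjacent_intervals (hI π (4*π/3)) (hI (4*π/3) (2*π)),
    ← intervalIntegral.integral_add_adjacent_intervals (hI (4*π/3) (5*π/3)) (hI (5*π/3) (2*π)),
    e1, e2, e3, e4, e5, e6]
  ring

open Fin.CommRing in
lemma castIff (m n : ℤ) : ((m : Fin 2) = (n : Fin 2)) ↔ m % 2 = n % 2 :=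
  (ZMod.intCast_eq_intCast_iff' m n 2)

def Feq : Plane ≃ᵐ ℝ × ℝ :=
  (MeasurableEquiv.toLp 2 (Fin 2 → ℝ)).symm.trans MeasurableEquiv.finTwoArrow

lemma Feq_mp : MeasurePreserving Feq volume volume :=
  (volume_preserving_finTwoArrow ℝ).comp (EuclideanSpace.volume_preserving_symm_measurableEquiv_toLp (Fin 2))

lemma Feq_apply (x : Plane) : Feq x = (x 0, x 1) := rfl

lemma para_eq : para (vec 1 0) (vec 0 (Real.sqrt 3))
    = Feq ⁻¹' (Ico (0:ℝ) 1 ×ˢ Ico (0:ℝ) (Real.sqrt 3)) := by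
  have hs3 := s3_pos
  ext x
  simp only [para, mem_setOf_eq, mem_preimage, Feq_apply, mem_prod, mem_Ico]
  constructor
  · rintro ⟨t, s, ht0, ht1, hs0, hs1, rfl⟩
    have c0 : (t • vec 1 0 + s • vec 0 (Real.sqrt 3)) 0 = t * 1 + s * 0 := rfl
    have c1 : (t • vec 1 0 + s • vec 0 (Real.sqrt 3)) 1 = t * 0 + s * Real.sqrt 3 := rfl
    rw [c0, c1]
    refine ⟨⟨by linarith, by linarith⟩, ⟨by nlinarith, by nlinarith⟩⟩
  · rintro ⟨⟨h00, h01⟩, h10, h11⟩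
    refine ⟨x 0, x 1 / Real.sqrt 3, h00, h01, by positivity, (div_lt_one hs3).2 h11, ?_⟩
    ext i
    fin_cases i
    · show x 0 = x 0 * 1 + x 1 / Real.sqrt 3 * 0
      ring
    · show x 1 = x 0 * 0 + x 1 / Real.sqrt 3 * Real.sqrt 3
      field_simp
      ring

lemma vol_para : (volume (para (vec 1 0) (vec 0 (Real.sqrt 3)))).toReal = Real.sqrt 3 := by
  rw [para_eq, Feq_mp.measure_preimage (measurableSet_Ico.prod measurableSet_Ico).nullMeasurableSet,
    Measure.volume_eq_prod, Measure.prod_prod, Real.volume_Ico, Real.volume_Ico,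
    ← ENNReal.ofReal_mul (by norm_num), ENNReal.toReal_ofReal (by nlinarith [Real.sqrt_nonneg 3])]
  norm_num

lemma pper_eq : pper stripes (vec 1 0) (vec 0 (Real.sqrt 3)) = 1/3 := by
  have hs3 := s3_pos
  have hpi := pi_pos
  -- the inner integrand as a function of (y, θ)
  set f : ℝ → ℝ → ℝ := fun y θ =>
    if ⌊y/(Real.sqrt 3/2)⌋ % 2 = ⌊(y + Real.sin θ)/(Real.sqrt 3/2)⌋ % 2 then (1:ℝ) else 0 with hf
  have hintegrand : ∀ (a : Plane) (θ : ℝ),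
      (if stripes a = stripes (a + dir θ) then (1:ℝ) else 0) = f (a 1) θ := by
    intro a θ
    rw [hf]
    exact if_congr (castIff _ _) rfl rfl
  set φ : ℝ → ℝ := fun y => ∫ θ in (0:ℝ)..(2*π), f y θ with hφ
  -- measurability of uncurried f
  have hmeas : Measurable (Function.uncurry f) := by
    have h1 : Measurable fun p : ℝ × ℝ => ⌊p.1/(Real.sqrt 3/2)⌋ % 2 :=
      (measurable_from_top (f := fun n : ℤ => n % 2)).comp
        ((measurable_fst.div_const _).floor)
    have h2 : Measurable fun p : ℝ × ℝ => ⌊(p.1 + Real.sin p.2)/(Real.sqrt 3/2)⌋ % 2 :=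
      (measurable_from_top (f := fun n : ℤ => n % 2)).comp
        (((measurable_fst.add (Real.measurable_sin.comp measurable_snd)).div_const _).floor)
    exact Measurable.ite (measurableSet_eq_fun h1 h2) measurable_const measurable_const
  -- the transported integral
  have step1 : (∫ a in para (vec 1 0) (vec 0 (Real.sqrt 3)), ∫ θ in (0:ℝ)..(2*π),
      (if stripes a = stripes (a + dir θ) then (1:ℝ) else 0))
      = ∫ a in para (vec 1 0) (vec 0 (Real.sqrt 3)), φ (a 1) := by
    apply setIntegral_congr_ae (by
      rw [para_eq]; exact Feq.measurable (measurableSet_Ico.prod measurableSet_Ico))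
    filter_upwards with a _
    exact intervalIntegral.integral_congr fun θ _ => hintegrand a θ
  have step2 : (∫ a in para (vec 1 0) (vec 0 (Real.sqrt 3)), φ (a 1))
      = ∫ p in Ico (0:ℝ) 1 ×ˢ Ico (0:ℝ) (Real.sqrt 3), φ p.2 := by
    rw [para_eq]
    exact Feq_mp.setIntegral_preimage_emb Feq.measurableEmbedding (fun p => φ p.2) _
  have step3 : (∫ p in Ico (0:ℝ) 1 ×ˢ Ico (0:ℝ) (Real.sqrt 3), φ p.2)
      = (∫ x in Ico (0:ℝ) 1, (1:ℝ)) * ∫ y in Ico (0:ℝ) (Real.sqrt 3), φ y := by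
    rw [Measure.volume_eq_prod, ← setIntegral_prod_mul (fun _ => (1:ℝ)) φ]
    simp only [one_mul]
  have hIoc : (0:ℝ) ≤ 2*π := by linarith
  -- Fubini
  have hfin1 : IsFiniteMeasure (volume.restrict (Ico (0:ℝ) (Real.sqrt 3))) :=
    ⟨by rw [Measure.restrict_apply_univ]; exact measure_Ico_lt_top⟩
  have hfin2 : IsFiniteMeasure (volume.restrict (Ioc (0:ℝ) (2*π))) :=
    ⟨by rw [Measure.restrict_apply_univ]; exact measure_Ioc_lt_top⟩
  have hint : Integrable (Function.uncurry f)
      ((volume.restrict (Ico (0:ℝ) (Real.sqrt 3))).prod (volume.restrict (Ioc (0:ℝ) (2*π)))) := by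
    have : IsFiniteMeasure
        ((volume.restrict (Ico (0:ℝ) (Real.sqrt 3))).prod (volume.restrict (Ioc (0:ℝ) (2*π)))) :=
      Measure.prod.instIsFiniteMeasure _ _
    apply Integrable.mono' (integrable_const (1:ℝ)) hmeas.aestronglyMeasurable
    filter_upwards with p
    rw [hf, Function.uncurry]
    split <;> simp
  have step4 : (∫ y in Ico (0:ℝ) (Real.sqrt 3), φ y) = 2*Real.sqrt 3*π/3 := by
    have swap := integral_integral_swap (f := f)
      (μ := volume.restrict (Ico (0:ℝ) (Real.sqrt 3)))
      (ν := volume.restrict (Ioc (0:ℝ) (2*π))) hint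
    calc (∫ y in Ico (0:ℝ) (Real.sqrt 3), φ y)
        = ∫ y in Ico (0:ℝ) (Real.sqrt 3), ∫ θ in Ioc (0:ℝ) (2*π), f y θ := by
          apply setIntegral_congr_ae measurableSet_Ico
          filter_upwards with y _
          rw [hφ]
          exact intervalIntegral.integral_of_le hIoc
      _ = ∫ θ in Ioc (0:ℝ) (2*π), ∫ y in Ico (0:ℝ) (Real.sqrt 3), f y θ := swap
      _ = ∫ θ in Ioc (0:ℝ) (2*π), |Real.sqrt 3 - 2 * abs (Real.sin θ)| := by
          apply setIntegral_congr_ae measurableSet_Ioc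
          filter_upwards with θ _
          exact sliceInt (Real.neg_one_le_sin θ) (Real.sin_le_one θ)
      _ = ∫ θ in (0:ℝ)..(2*π), |Real.sqrt 3 - 2 * abs (Real.sin θ)| :=
          (intervalIntegral.integral_of_le hIoc).symm
      _ = 2*Real.sqrt 3*π/3 := thetaIntegral
  have step5 : (∫ x in Ico (0:ℝ) 1, (1:ℝ)) = 1 := by
    simp [Real.volume_Ico]
  rw [pper, step1, step2, step3, step4, step5, vol_para, one_mul]
  have : Real.sqrt 3 ≠ 0 := by positivity
  field_simp

open Fin.CommRing in
lemma stripes_measurable : Measurable stripes :=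
  (measurable_from_top (f := fun n : ℤ => (n : Fin 2))).comp
    ((((measurable_pi_apply 1).comp (WithLp.measurable_ofLp 2 (Fin 2 → ℝ))).div_const _).floor)

lemma linIndep : LinearIndependent ℝ ![vec 1 0, vec 0 (Real.sqrt 3)] := by
  rw [linearIndependent_fin2]
  constructor
  · simp only [Matrix.cons_val_one, Matrix.head_cons]
    intro h
    have h1 : Real.sqrt 3 = 0 := congr_fun (congr_arg WithLp.ofLp h) 1
    exact absurd h1 (by positivity)
  · intro a
    simp only [Matrix.cons_val_one, Matrix.head_cons, Matrix.cons_val_zero]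
    intro h
    have h0 : a * 0 = 1 := congr_fun (congr_arg WithLp.ofLp h) 0
    norm_num at h0

open Fin.CommRing in
lemma periodic1 (x : Plane) : stripes (x + vec 1 0) = stripes x := by
  show ((⌊(x 1 + 0) / (Real.sqrt 3/2)⌋ : ℤ) : Fin 2) = _
  rw [add_zero]
  rfl

open Fin.CommRing in
lemma periodic2 (x : Plane) : stripes (x + vec 0 (Real.sqrt 3)) = stripes x := by
  show ((⌊(x 1 + Real.sqrt 3) / (Real.sqrt 3/2)⌋ : ℤ) : Fin 2)
    = ((⌊x 1 / (Real.sqrt 3/2)⌋ : ℤ) : Fin 2)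
  have hs3 := s3_pos
  have key : (x 1 + Real.sqrt 3) / (Real.sqrt 3/2) = x 1 / (Real.sqrt 3/2) + (2:ℤ) := by
    push_cast
    field_simp
  rw [key, Int.floor_add_intCast, castIff]
  omega


/-- The stripes coloring is a measurable periodic 2-coloring with periods `(1,0)` and
`(0,√3)`, and it attains `p^per(c) = 1/3`, the optimal value for 2 colors. -/
theorem stmt11 :
    Measurable stripes ∧
    LinearIndependent ℝ ![vec 1 0, vec 0 (Real.sqrt 3)] ∧
    (∀ x : Plane, stripes (x + vec 1 0) = stripes x ∧
      stripes (x + vec 0 (Real.sqrt 3)) = stripes x) ∧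
    pper stripes (vec 1 0) (vec 0 (Real.sqrt 3)) = 1 / 3 :=
  ⟨stripes_measurable, linIndep, fun x => ⟨periodic1 x, periodic2 x⟩, pper_eq⟩

end
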